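/- X̄(λ, μ, f) = (λ/μ)·(r−f')(f'−f)/(λ(r−f') + μ(r−f)) is strictly convex in λ on the interval of λ > 0 where λ(r−f') + μ(r−f) < 0: its second partial derivative with respect to λ is strictly positive. -/

import Mathlib

/-- X̄ is strictly convex in λ on the stable region: ∂²X̄/∂λ² > 0. -/
theorem stmt_6 (mu f f' r lam : ℝ)
    (hmu : 0 < mu) (hf' : 0 ≤ f') (hr1 : f' < r) (hr2 : r < f)
    (hlam : 0 < lam) (hstab : lam * (r - f') + mu * (r - f) < 0) :
    0 < deriv (deriv (fun l : ℝ =>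
      (l / mu) * ((r - f') * (f' - f)) / (l * (r - f') + mu * (r - f)))) lam := by
  set a := r - f' with ha
  set b := mu * (r - f) with hb
  set A := (r - f') * (f' - f) with hA
  have ha0 : 0 < a := by rw [ha]; linarith
  have hb0 : b < 0 := mul_neg_of_pos_of_neg hmu (by linarith)
  have hA0 : A < 0 := mul_neg_of_pos_of_neg (by linarith) (by linarith)
  have hderiv : ∀ l : ℝ, l * a + b ≠ 0 →
      HasDerivAt (fun l : ℝ => (l / mu) * A / (l * a + b))
        (A * b / mu / (l * a + b) ^ 2) l := by
    intro l hl
    have h1 : HasDerivAt (fun l : ℝ => (l / mu) * A) (A / mu) l := by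
      have := ((hasDerivAt_id l).div_const mu).mul_const A
      exact this.congr_deriv (by ring)
    have h2 : HasDerivAt (fun l : ℝ => l * a + b) a l := by
      simpa using ((hasDerivAt_id l).mul_const a).add_const b
    have h3 := h1.div h2 hl
    refine h3.congr_deriv ?_
    field_simp
    ring
  have hopen : IsOpen {l : ℝ | l * a + b < 0} :=
    isOpen_lt (by continuity) continuous_const
  have hmem : lam ∈ {l : ℝ | l * a + b < 0} := hstab
  have heq : (deriv (fun l : ℝ => (l / mu) * A / (l * a + b)))
      =ᶠ[nhds lam] fun l => A * b / mu / (l * a + b) ^ 2 := by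
    filter_upwards [hopen.mem_nhds hmem] with l hl
    exact (hderiv l (ne_of_lt hl)).deriv
  have hlamne : lam * a + b ≠ 0 := ne_of_lt hstab
  have h2deriv : HasDerivAt (fun l : ℝ => A * b / mu / (l * a + b) ^ 2)
      (-(A * b / mu) * (2 * a) / (lam * a + b) ^ 3) lam := by
    have h2 : HasDerivAt (fun l : ℝ => l * a + b) a lam := by
      simpa using ((hasDerivAt_id lam).mul_const a).add_const b
    have hden : HasDerivAt (fun l : ℝ => (l * a + b) ^ 2)
        (2 * (lam * a + b) ^ 1 * a) lam := h2.pow 2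
    have h4 := (hasDerivAt_const lam (A * b / mu)).div hden (pow_ne_zero 2 hlamne)
    refine h4.congr_deriv ?_
    field_simp
    ring
  rw [heq.deriv_eq, h2deriv.deriv]
  have hnum : -(A * b / mu) * (2 * a) < 0 := by
    have hAb : 0 < A * b := mul_pos_of_neg_of_neg hA0 hb0
    have : 0 < A * b / mu := div_pos hAb hmu
    nlinarith
  have hcube : (lam * a + b) ^ 3 < 0 := Odd.pow_neg (by decide) hstab
  exact div_pos_of_neg_of_neg hnum hcube
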